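/- Let B = ((J,K),E) be a bipartite graph where every vertex has finite degree, and suppose for every finite S ⊆ J we have |S| ≤ |∂S| and for every finite S ⊆ K we have |S| ≤ |∂S|, where ∂S denotes the set of vertices adjacent to some element of S. Then B has a perfect matching, i.e., a bijection j : K → J with (j(k), k) ∈ E for all k ∈ K. -/

import Mathlib

open Set Function

/-- Structured Schröder–Bernstein: the bijection can be chosen to agree pointwise with
one of the two injections (in the appropriate direction). -/
theorem sb_structured {α β : Type*} {f : α → β} {g : β → α} (hf : Function.Injective f)
    (hg : Function.Injective g) :
    ∃ h : α → β, Function.Bijective h ∧ ∀ a, h a = f a ∨ g (h a) = a := by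
  classical
  cases' isEmpty_or_nonempty β with hβ hβ
  · have : IsEmpty α := Function.isEmpty f
    exact ⟨f, ⟨hf, fun b => (IsEmpty.false b).elim⟩, fun a => (IsEmpty.false a).elim⟩
  set F : Set α →o Set α :=
    { toFun := fun s => (g '' (f '' s)ᶜ)ᶜ
      monotone' := fun s t hst =>
        compl_subset_compl.mpr <| image_mono <| compl_subset_compl.mpr <| image_mono hst }
  set s : Set α := F.lfp
  have hs : (g '' (f '' s)ᶜ)ᶜ = s := F.map_lfp
  have hns : g '' (f '' s)ᶜ = sᶜ := compl_injective (by simp [hs])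
  set g' := invFun g
  have g'g : LeftInverse g' g := leftInverse_invFun hg
  have hg'ns : g' '' sᶜ = (f '' s)ᶜ := by rw [← hns, g'g.image_image]
  set h : α → β := s.piecewise f g'
  have hsurj : Surjective h := by rw [← range_eq_univ, range_piecewise, hg'ns, union_compl_self]
  have hinj : Injective h := by
    refine (injective_piecewise_iff _).2 ⟨hf.injOn, ?_, ?_⟩
    · intro x hx y hy hxy
      obtain ⟨x', _, rfl⟩ : x ∈ g '' (f '' s)ᶜ := by rwa [hns]
      obtain ⟨y', _, rfl⟩ : y ∈ g '' (f '' s)ᶜ := by rwa [hns]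
      rw [g'g _, g'g _] at hxy
      rw [hxy]
    · intro x hx y hy hxy
      obtain ⟨y', hy', rfl⟩ : y ∈ g '' (f '' s)ᶜ := by rwa [hns]
      rw [g'g _] at hxy
      exact hy' ⟨x, hx, hxy⟩
  refine ⟨h, ⟨hinj, hsurj⟩, fun a => ?_⟩
  by_cases ha : a ∈ s
  · left; simp [h, Set.piecewise, ha]
  · right
    obtain ⟨b, _, rfl⟩ : a ∈ g '' (f '' s)ᶜ := by rwa [hns]
    simp [h, Set.piecewise, ha, g'g b]

/-- two-sided infinite Hall marriage theorem. Let `B = ((J,K),E)` be a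
bipartite graph (with countable vertex sets) in which every vertex has finite degree, and
suppose that for every finite `S ⊆ J` we have `|S| ≤ |∂S|`, and for every finite `S ⊆ K` we
have `|S| ≤ |∂S|`, where `∂S` is the set of vertices adjacent to some element of `S`.  Then `B`
has a perfect matching: a bijection `f : K → J` with `(f k, k) ∈ E` for all `k`. -/
theorem stmt2 {J K : Type*} [Countable J] [Countable K]
    (E : J → K → Prop)
    (hJfin : ∀ j, {k | E j k}.Finite)
    (hKfin : ∀ k, {j | E j k}.Finite)
    (hallJ : ∀ S : Finset J, S.card ≤ {k | ∃ j ∈ S, E j k}.ncard)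
    (hallK : ∀ S : Finset K, S.card ≤ {j | ∃ k ∈ S, E j k}.ncard) :
    ∃ f : K → J, Function.Bijective f ∧ ∀ k, E (f k) k := by
  classical
  -- injection K → J
  set tK : K → Finset J := fun k => (hKfin k).toFinset with htK
  have hK : ∀ S : Finset K, S.card ≤ (S.biUnion tK).card := by
    intro S
    refine (hallK S).trans ?_
    have : {j | ∃ k ∈ S, E j k} = ↑(S.biUnion tK) := by
      ext j; simp [htK]
    rw [this, Set.ncard_coe_finset]
  obtain ⟨g, hginj, hg⟩ := (Finset.all_card_le_biUnion_card_iff_exists_injective tK).1 hK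
  -- injection J → K
  set tJ : J → Finset K := fun j => (hJfin j).toFinset with htJ
  have hJ : ∀ S : Finset J, S.card ≤ (S.biUnion tJ).card := by
    intro S
    refine (hallJ S).trans ?_
    have : {k | ∃ j ∈ S, E j k} = ↑(S.biUnion tJ) := by
      ext k; simp [htJ]
    rw [this, Set.ncard_coe_finset]
  obtain ⟨h, hhinj, hh⟩ := (Finset.all_card_le_biUnion_card_iff_exists_injective tJ).1 hJ
  have hgE : ∀ k, E (g k) k := fun k => by simpa [htK] using hg k
  have hhE : ∀ j, E j (h j) := fun j => by simpa [htJ] using hh j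
  obtain ⟨f, hfbij, hf⟩ := sb_structured hginj hhinj
  refine ⟨f, hfbij, fun k => ?_⟩
  rcases hf k with h1 | h2
  · rw [h1]; exact hgE k
  · have := hhE (f k); rwa [h2] at this
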